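/- Let d ≥ 1, N ≥ 1, and let x₀,…,x_N ∈ ℝ^d. Then 𝒞(x₀,…,x_N) = inf over (v₀,…,v_N) ∈ (ℝ^d)^{N+1} of Σ_{i=0}^{N−1} c(x_i, x_{i+1}, v_i, v_{i+1}), and the infimum on the right-hand side is attained. -/

import Mathlib

open MeasureTheory

noncomputable section

/-- The cost `c(x, x', v, v') = 12‖x'−x−v‖² − 12⟨x'−x−v, v'−v⟩ + 4‖v'−v‖²`. -/
def splineCost {d : ℕ} (x x' v v' : EuclideanSpace ℝ (Fin d)) : ℝ :=
  12 * ‖x' - x - v‖ ^ 2 - 12 * (inner ℝ (x' - x - v) (v' - v) : ℝ) + 4 * ‖v' - v‖ ^ 2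

/-- `𝒞(x₀,…,x_N)`: the infimum of `∫₀^N ‖X''‖²` over all C² curves `X` with
`X(i) = x i` for every `i = 0, …, N`. -/
def multiCost {d : ℕ} (N : ℕ) (x : Fin (N + 1) → EuclideanSpace ℝ (Fin d)) : ℝ :=
  sInf { y : ℝ | ∃ X : ℝ → EuclideanSpace ℝ (Fin d), ContDiff ℝ 2 X ∧
      (∀ i : Fin (N + 1), X ((i : ℕ) : ℝ) = x i) ∧
      y = ∫ t in (0:ℝ)..(N:ℝ), ‖deriv (deriv X) t‖ ^ 2 }

open intervalIntegral

variable {d : ℕ}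
local notation "E" => EuclideanSpace ℝ (Fin d)


def tp (t : ℝ) : ℝ := (max t 0)^3
def tp2 (t : ℝ) : ℝ := 3 * (max t 0)^2

lemma hasDerivAt_zero_of_bound (f : ℝ → ℝ) (c : ℝ) (hc : 0 ≤ c) (h0 : f 0 = 0)
    (hb : ∀ t, |t| ≤ 1 → |f t| ≤ c * |t|^2) : HasDerivAt f 0 0 := by
  rw [hasDerivAt_iff_isLittleO]
  simp only [h0, sub_zero, smul_zero, zero_mul]
  rw [Asymptotics.isLittleO_iff]
  intro ε hε
  have hc1 : (0:ℝ) < c + 1 := by linarith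
  have : ∀ᶠ t in nhds (0:ℝ), |t| < ε / (c+1) ∧ |t| < 1 := by
    have h1 : (0:ℝ) < ε / (c+1) ⊓ 1 := by
      simp [lt_inf_iff, div_pos hε hc1]
    filter_upwards [Metric.ball_mem_nhds (0:ℝ) h1] with t ht
    simp only [Metric.mem_ball, Real.dist_eq, sub_zero] at ht
    exact ⟨lt_of_lt_of_le ht inf_le_left, lt_of_lt_of_le ht inf_le_right⟩
  filter_upwards [this] with t ⟨ht1, ht2⟩
  calc ‖f t‖ = |f t| := rfl
    _ ≤ c * |t|^2 := hb t ht2.le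
    _ = c * |t| * |t| := by ring
    _ ≤ (c+1) * (ε/(c+1)) * |t| := by
        have h1 : c * |t| ≤ (c+1) * (ε/(c+1)) := by
          calc c * |t| ≤ (c+1) * |t| := by nlinarith [abs_nonneg t]
            _ ≤ (c+1) * (ε/(c+1)) := by nlinarith
        nlinarith [abs_nonneg t]
    _ = ε * |t| := by field_simp
    _ = ε * ‖t‖ := rfl

lemma tp_hasDerivAt (t : ℝ) : HasDerivAt tp (tp2 t) t := by
  rcases lt_trichotomy t 0 with h | h | h
  · have hev : tp =ᶠ[nhds t] fun _ => (0:ℝ) := by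
      filter_upwards [Iio_mem_nhds h] with s hs
      simp [tp, max_eq_right (le_of_lt (Set.mem_Iio.mp hs))]
    have h0 : HasDerivAt (fun _ : ℝ => (0:ℝ)) 0 t := hasDerivAt_const t 0
    have := h0.congr_of_eventuallyEq hev
    simpa [tp2, max_eq_right h.le] using this
  · subst h
    have : HasDerivAt tp 0 0 := by
      apply hasDerivAt_zero_of_bound tp 1 zero_le_one
      · simp [tp]
      · intro t ht
        rcases le_or_gt t 0 with h | h
        · simp [tp, max_eq_right h, sq_abs]; positivity
        · rw [tp, max_eq_left h.le, abs_of_pos (by positivity : (0:ℝ) < t^3), sq_abs, one_mul]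
          rw [abs_of_pos h] at ht
          nlinarith
    simpa [tp2] using this
  · have hev : tp =ᶠ[nhds t] fun s => s^3 := by
      filter_upwards [Ioi_mem_nhds h] with s hs
      simp [tp, max_eq_left (le_of_lt (Set.mem_Ioi.mp hs))]
    have h0 : HasDerivAt (fun s : ℝ => s^3) (3 * t^2) t := by
      simpa using hasDerivAt_pow 3 t
    have := h0.congr_of_eventuallyEq hev
    simpa [tp2, max_eq_left h.le] using this

lemma tp2_hasDerivAt (t : ℝ) : HasDerivAt tp2 (6 * max t 0) t := by
  rcases lt_trichotomy t 0 with h | h | h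
  · have hev : tp2 =ᶠ[nhds t] fun _ => (0:ℝ) := by
      filter_upwards [Iio_mem_nhds h] with s hs
      simp [tp2, max_eq_right (le_of_lt (Set.mem_Iio.mp hs))]
    have h0 : HasDerivAt (fun _ : ℝ => (0:ℝ)) 0 t := hasDerivAt_const t 0
    have := h0.congr_of_eventuallyEq hev
    simpa [max_eq_right h.le] using this
  · subst h
    have : HasDerivAt tp2 0 0 := by
      apply hasDerivAt_zero_of_bound tp2 3 (by norm_num)
      · simp [tp2]
      · intro t ht
        rcases le_or_gt t 0 with h | h
        · simp [tp2, max_eq_right h, sq_abs]; positivity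
        · rw [tp2, max_eq_left h.le, abs_of_pos (by positivity), sq_abs]
    simpa using this
  · have hev : tp2 =ᶠ[nhds t] fun s => 3 * s^2 := by
      filter_upwards [Ioi_mem_nhds h] with s hs
      simp [tp2, max_eq_left (le_of_lt (Set.mem_Ioi.mp hs))]
    have h0 : HasDerivAt (fun s : ℝ => 3 * s^2) (6 * t) t := by
      have := (hasDerivAt_pow 2 t).const_mul (3:ℝ)
      exact this.congr_deriv (by norm_num; ring)
    have := h0.congr_of_eventuallyEq hev
    simpa [max_eq_left h.le] using this

lemma tp_deriv : deriv tp = tp2 := funext fun t => (tp_hasDerivAt t).deriv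
lemma tp2_deriv : deriv tp2 = fun t => 6 * max t 0 :=
  funext fun t => (tp2_hasDerivAt t).deriv

lemma tp_contDiff : ContDiff ℝ 2 tp := by
  rw [show (2 : WithTop ℕ∞) = 1 + 1 from by norm_num, contDiff_succ_iff_deriv]
  refine ⟨fun t => (tp_hasDerivAt t).differentiableAt, by simp, ?_⟩
  rw [tp_deriv, show (1 : WithTop ℕ∞) = 0 + 1 from by norm_num, contDiff_succ_iff_deriv]
  refine ⟨fun t => (tp2_hasDerivAt t).differentiableAt, by simp, ?_⟩
  rw [tp2_deriv, contDiff_zero]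
  exact continuous_const.mul (continuous_id.max continuous_const)

def hB (x x' v v' : E) : E := (3:ℝ) • (x' - x) - (2:ℝ) • v - v'
def hC (x x' v v' : E) : E := v + v' - (2:ℝ) • (x' - x)
def herm (x x' v v' : E) (t : ℝ) : E :=
  x + t • v + (t^2) • hB x x' v v' + (t^3) • hC x x' v v'
def hermD (x x' v v' : E) (t : ℝ) : E :=
  v + (2*t) • hB x x' v v' + (3*t^2) • hC x x' v v'
def hermDD (x x' v v' : E) (t : ℝ) : E :=
  (2:ℝ) • hB x x' v v' + (6*t) • hC x x' v v'

lemma herm_hasDerivAt (x x' v v' : E) (t : ℝ) :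
    HasDerivAt (herm x x' v v') (hermD x x' v v' t) t := by
  unfold herm hermD
  have h1 : HasDerivAt (fun t : ℝ => t • v) ((1:ℝ) • v) t := (hasDerivAt_id t).smul_const v
  have h2 : HasDerivAt (fun t : ℝ => (t^2) • hB x x' v v') ((2*t^1) • hB x x' v v') t := by
    have := (hasDerivAt_pow 2 t).smul_const (hB x x' v v'); simpa using this
  have h3 : HasDerivAt (fun t : ℝ => (t^3) • hC x x' v v') ((3*t^2) • hC x x' v v') t := by
    have := (hasDerivAt_pow 3 t).smul_const (hC x x' v v'); simpa using this
  have := (((hasDerivAt_const t x).add h1).add h2).add h3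
  exact this.congr_deriv (by module)

lemma hermD_hasDerivAt (x x' v v' : E) (t : ℝ) :
    HasDerivAt (hermD x x' v v') (hermDD x x' v v' t) t := by
  unfold hermD hermDD
  have h2 : HasDerivAt (fun t : ℝ => (2*t) • hB x x' v v') ((2:ℝ) • hB x x' v v') t := by
    have := ((hasDerivAt_id t).const_mul (2:ℝ)).smul_const (hB x x' v v'); simpa using this
  have h3 : HasDerivAt (fun t : ℝ => (3*t^2) • hC x x' v v') ((6*t) • hC x x' v v') t := by
    have := ((hasDerivAt_pow 2 t).const_mul (3:ℝ)).smul_const (hC x x' v v')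
    exact this.congr_deriv (by congr 1; push_cast; ring)
  have := ((hasDerivAt_const t v).add h2).add h3
  exact this.congr_deriv (by module)

lemma herm_zero (x x' v v' : E) : herm x x' v v' 0 = x := by simp [herm]
lemma herm_one (x x' v v' : E) : herm x x' v v' 1 = x' := by
  simp only [herm, hB, hC, one_pow, one_smul]; module
lemma hermD_zero (x x' v v' : E) : hermD x x' v v' 0 = v := by simp [hermD]
lemma hermD_one (x x' v v' : E) : hermD x x' v v' 1 = v' := by
  simp only [hermD, hB, hC, mul_one, one_pow]; module

lemma norm_sq_hermDD (x x' v v' : E) (t : ℝ) :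
    ‖hermDD x x' v v' t‖^2 = 4*‖hB x x' v v'‖^2
      + (24 * (inner ℝ (hB x x' v v') (hC x x' v v') : ℝ)) * t
      + (36*‖hC x x' v v'‖^2) * t^2 := by
  rw [hermDD, ← real_inner_self_eq_norm_sq, ← real_inner_self_eq_norm_sq,
    ← real_inner_self_eq_norm_sq]
  simp only [inner_add_left, inner_add_right, real_inner_smul_left, real_inner_smul_right]
  rw [real_inner_comm (hC x x' v v') (hB x x' v v')]
  ring

lemma energy_herm (x x' v v' : E) :
    ∫ t in (0:ℝ)..1, ‖hermDD x x' v v' t‖^2 = splineCost x x' v v' := by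
  have h1 : ∫ t in (0:ℝ)..1, ‖hermDD x x' v v' t‖^2
      = 4*‖hB x x' v v'‖^2 + 12 * (inner ℝ (hB x x' v v') (hC x x' v v') : ℝ)
        + 12*‖hC x x' v v'‖^2 := by
    rw [intervalIntegral.integral_congr (g := fun t => 4*‖hB x x' v v'‖^2
      + (24 * (inner ℝ (hB x x' v v') (hC x x' v v') : ℝ)) * t
      + (36*‖hC x x' v v'‖^2) * t^2) (fun t _ => norm_sq_hermDD x x' v v' t)]
    rw [intervalIntegral.integral_add, intervalIntegral.integral_add]
    · rw [intervalIntegral.integral_const, intervalIntegral.integral_const_mul,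
        intervalIntegral.integral_const_mul, integral_id]
      have : ∫ t in (0:ℝ)..1, t^2 = 1/3 := by
        rw [integral_pow]; norm_num
      rw [this]; norm_num; ring
    · exact intervalIntegrable_const
    · exact (intervalIntegral.intervalIntegrable_id).const_mul _
    · exact intervalIntegrable_const.add ((intervalIntegral.intervalIntegrable_id).const_mul _)
    · exact ((continuous_pow 2).intervalIntegrable 0 1).const_mul _
  rw [h1, splineCost, hB, hC]
  rw [← real_inner_self_eq_norm_sq, ← real_inner_self_eq_norm_sq, ← real_inner_self_eq_norm_sq,
    ← real_inner_self_eq_norm_sq]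
  simp only [inner_add_left, inner_add_right, inner_sub_left, inner_sub_right,
    real_inner_smul_left, real_inner_smul_right]
  rw [real_inner_comm x' x, real_inner_comm v x, real_inner_comm v x',
    real_inner_comm v' x, real_inner_comm v' x', real_inner_comm v' v]
  ring

lemma hermDD_hasDerivAt (x x' v v' : E) (t : ℝ) :
    HasDerivAt (hermDD x x' v v') ((6:ℝ) • hC x x' v v') t := by
  unfold hermDD
  have h := ((hasDerivAt_id t).const_mul (6:ℝ)).smul_const (hC x x' v v')
  have := (hasDerivAt_const t ((2:ℝ) • hB x x' v v')).add h
  exact this.congr_deriv (by simp)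

lemma hermDD_continuous (x x' v v' : E) : Continuous (hermDD x x' v v') :=
  continuous_const.add ((continuous_const.mul continuous_id).smul continuous_const)

lemma hasDerivAt_comp_sub {f : ℝ → E} {f' : E} (a t : ℝ) (hf : HasDerivAt f f' (t - a)) :
    HasDerivAt (fun s => f (s - a)) f' t := by
  have := hf.scomp t ((hasDerivAt_id t).sub_const a)
  exact this.congr_deriv (by simp)

lemma contDiff_two_bits (X : ℝ → E) (hX : ContDiff ℝ 2 X) :
    Differentiable ℝ X ∧ Differentiable ℝ (deriv X) ∧ Continuous (deriv (deriv X)) := by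
  rw [show (2 : WithTop ℕ∞) = 1 + 1 from by norm_num, contDiff_succ_iff_deriv] at hX
  obtain ⟨h1, -, h2⟩ := hX
  rw [show (1 : WithTop ℕ∞) = 0 + 1 from by norm_num, contDiff_succ_iff_deriv] at h2
  obtain ⟨h2, -, h3⟩ := h2
  exact ⟨h1, h2, contDiff_zero.mp h3⟩

lemma interval_lb (X : ℝ → E) (hX : ContDiff ℝ 2 X) (a : ℝ) :
    splineCost (X a) (X (a+1)) (deriv X a) (deriv X (a+1))
      ≤ ∫ t in a..(a+1), ‖deriv (deriv X) t‖^2 := by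
  obtain ⟨hX1, hX2, hX3⟩ := contDiff_two_bits X hX
  set x := X a with hx; set x' := X (a+1) with hx'
  set v := deriv X a with hv; set v' := deriv X (a+1) with hv'
  set C : E := hC x x' v v' with hCdef
  set H : ℝ → E := fun t => herm x x' v v' (t - a) with hH
  set HD : ℝ → E := fun t => hermD x x' v v' (t - a) with hHD
  set HDD : ℝ → E := fun t => hermDD x x' v v' (t - a) with hHDD
  have hHDDc : Continuous HDD :=
    (hermDD_continuous x x' v v').comp (continuous_id.sub continuous_const)
  set D0 : ℝ → E := fun t => X t - H t with hD0
  set D1 : ℝ → E := fun t => deriv X t - HD t with hD1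
  set D2 : ℝ → E := fun t => deriv (deriv X) t - HDD t with hD2
  have hD2c : Continuous D2 := hX3.sub hHDDc
  have hD0d : ∀ t, HasDerivAt D0 (D1 t) t := fun t =>
    (hX1 t).hasDerivAt.sub (hasDerivAt_comp_sub a t (herm_hasDerivAt x x' v v' (t-a)))
  have hD1d : ∀ t, HasDerivAt D1 (D2 t) t := fun t =>
    (hX2 t).hasDerivAt.sub (hasDerivAt_comp_sub a t (hermD_hasDerivAt x x' v v' (t-a)))
  have hHDDd : ∀ t, HasDerivAt HDD ((6:ℝ) • C) t := fun t =>
    hasDerivAt_comp_sub a t (hermDD_hasDerivAt x x' v v' (t-a))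
  set φ : ℝ → ℝ := fun t => (inner ℝ (D1 t) (HDD t) : ℝ) - (inner ℝ (D0 t) ((6:ℝ)•C) : ℝ)
    with hφdef
  have hφd : ∀ t, HasDerivAt φ ((inner ℝ (D2 t) (HDD t) : ℝ)) t := by
    intro t
    have h1 := HasDerivAt.inner ℝ (hD1d t) (hHDDd t)
    have h2 := HasDerivAt.inner ℝ (hD0d t) (hasDerivAt_const t ((6:ℝ)•C))
    have h3 := h1.sub h2
    exact h3.congr_deriv (by simp [real_inner_comm])
  have key : (∫ t in a..(a+1), (inner ℝ (D2 t) (HDD t) : ℝ)) = 0 := by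
    rw [intervalIntegral.integral_eq_sub_of_hasDerivAt (fun t _ => hφd t)
      ((hD2c.inner hHDDc).intervalIntegrable a (a+1))]
    have e0 : D0 a = 0 := by
      simp only [hD0, hH, sub_self]
      rw [herm_zero, ← hx, sub_self]
    have e1 : D0 (a+1) = 0 := by
      simp only [hD0, hH, add_sub_cancel_left]
      rw [herm_one, ← hx', sub_self]
    have e2 : D1 a = 0 := by
      simp only [hD1, hHD, sub_self]
      rw [hermD_zero, ← hv, sub_self]
    have e3 : D1 (a+1) = 0 := by
      simp only [hD1, hHD, add_sub_cancel_left]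
      rw [hermD_one, ← hv', sub_self]
    simp [hφdef, e0, e1, e2, e3]
  have point : ∀ t, ‖deriv (deriv X) t‖^2
      = ‖HDD t‖^2 + (2*(inner ℝ (D2 t) (HDD t):ℝ) + ‖D2 t‖^2) := by
    intro t
    have h : deriv (deriv X) t = HDD t + D2 t := by simp [hD2]
    rw [h, norm_add_sq_real, real_inner_comm]
    ring
  have hint : ∫ t in a..(a+1), ‖deriv (deriv X) t‖^2
      = (∫ t in a..(a+1), ‖HDD t‖^2)
        + ((2 * ∫ t in a..(a+1), (inner ℝ (D2 t) (HDD t):ℝ))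
           + ∫ t in a..(a+1), ‖D2 t‖^2) := by
    rw [← intervalIntegral.integral_const_mul, ← intervalIntegral.integral_add
        (f := fun t => 2 * inner ℝ (D2 t) (HDD t)) (g := fun t => ‖D2 t‖^2)
        (((continuous_const.mul (hD2c.inner hHDDc))).intervalIntegrable a (a+1))
        (((hD2c.norm.pow 2)).intervalIntegrable a (a+1)),
      ← intervalIntegral.integral_add (f := fun t => ‖HDD t‖^2)
          (g := fun t => 2 * inner ℝ (D2 t) (HDD t) + ‖D2 t‖^2) ((hHDDc.norm.pow 2).intervalIntegrable a (a+1))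
        ((((continuous_const.mul (hD2c.inner hHDDc))).add (hD2c.norm.pow 2)).intervalIntegrable a (a+1))]
    exact intervalIntegral.integral_congr fun t _ => point t
  have hE : (∫ t in a..(a+1), ‖HDD t‖^2) = splineCost x x' v v' := by
    have := intervalIntegral.integral_comp_sub_right
      (fun s => ‖hermDD x x' v v' s‖^2) a (a := a) (b := a+1)
    simp only [hHDD]
    rw [this, sub_self, add_sub_cancel_left, energy_herm]
  have hpos : 0 ≤ ∫ t in a..(a+1), ‖D2 t‖^2 := by
    apply intervalIntegral.integral_nonneg (by linarith)
    intro t _; positivity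
  rw [hint, hE, key]
  linarith

lemma splineCost_expand (x x' v v' : E) :
    splineCost x x' v v' = 12*‖x'-x‖^2 - 12*(inner ℝ (x'-x) v : ℝ) - 12*(inner ℝ (x'-x) v' : ℝ)
      + 4*‖v‖^2 + 4*‖v'‖^2 + 4*(inner ℝ v v' : ℝ) := by
  rw [splineCost]
  simp only [← real_inner_self_eq_norm_sq]
  simp only [inner_add_left, inner_add_right, inner_sub_left, inner_sub_right,
    real_inner_smul_left, real_inner_smul_right]
  simp only [real_inner_comm x' x, real_inner_comm v x, real_inner_comm v x',
    real_inner_comm v' x, real_inner_comm v' x', real_inner_comm v' v]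
  ring

lemma splineCost_perturb_v (x x' v v' w : E) (s : ℝ) :
    splineCost x x' (v + s•w) v' = splineCost x x' v v'
      + s * (inner ℝ ((8:ℝ)•v + (4:ℝ)•v' - (12:ℝ)•(x'-x)) w : ℝ) + s^2 * (4*‖w‖^2) := by
  rw [splineCost_expand, splineCost_expand]
  simp only [← real_inner_self_eq_norm_sq]
  simp only [inner_add_left, inner_add_right, inner_sub_left, inner_sub_right,
    real_inner_smul_left, real_inner_smul_right]
  simp only [real_inner_comm x' x, real_inner_comm v x, real_inner_comm v x',
    real_inner_comm v' x, real_inner_comm v' x', real_inner_comm v' v, real_inner_comm w x,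
    real_inner_comm w x', real_inner_comm w v, real_inner_comm w v']
  ring

lemma splineCost_perturb_v' (x x' v v' w : E) (s : ℝ) :
    splineCost x x' v (v' + s•w) = splineCost x x' v v'
      + s * (inner ℝ ((4:ℝ)•v + (8:ℝ)•v' - (12:ℝ)•(x'-x)) w : ℝ) + s^2 * (4*‖w‖^2) := by
  rw [splineCost_expand, splineCost_expand]
  simp only [← real_inner_self_eq_norm_sq]
  simp only [inner_add_left, inner_add_right, inner_sub_left, inner_sub_right,
    real_inner_smul_left, real_inner_smul_right]
  simp only [real_inner_comm x' x, real_inner_comm v x, real_inner_comm v x',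
    real_inner_comm v' x, real_inner_comm v' x', real_inner_comm v' v, real_inner_comm w x,
    real_inner_comm w x', real_inner_comm w v, real_inner_comm w v']
  ring

lemma eq_zero_of_quadratic {L Q : ℝ} (hQ : 0 ≤ Q) (h : ∀ s : ℝ, 0 ≤ s * L + s^2 * Q) :
    L = 0 := by
  have h1 := h (-L/(Q+1))
  have hu : (0:ℝ) < Q + 1 := by linarith
  have h2 : (-L/(Q+1))*L + (-L/(Q+1))^2*Q = (-(L^2)*(Q+1) + L^2*Q)/(Q+1)^2 := by
    field_simp
  rw [h2] at h1
  have h3 : 0 ≤ -(L^2)*(Q+1) + L^2*Q := by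
    by_contra hc
    push_neg at hc
    have := div_neg_of_neg_of_pos hc (by positivity : (0:ℝ) < (Q+1)^2)
    linarith
  nlinarith [sq_nonneg L]

lemma splineCost_coercive_bound (x x' v v' : E) (M : ℝ) (hM : ‖x' - x‖ ≤ M) :
    2*‖v‖^2 + 2*‖v'‖^2 - 12*M*(‖v‖+‖v'‖) ≤ splineCost x x' v v' := by
  have hM0 : 0 ≤ M := le_trans (norm_nonneg _) hM
  rw [splineCost_expand]
  have h1 : (inner ℝ (x'-x) v : ℝ) ≤ M * ‖v‖ := by
    calc (inner ℝ (x'-x) v : ℝ) ≤ ‖x'-x‖ * ‖v‖ := real_inner_le_norm _ _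
      _ ≤ M * ‖v‖ := by nlinarith [norm_nonneg v]
  have h2 : (inner ℝ (x'-x) v' : ℝ) ≤ M * ‖v'‖ := by
    calc (inner ℝ (x'-x) v' : ℝ) ≤ ‖x'-x‖ * ‖v'‖ := real_inner_le_norm _ _
      _ ≤ M * ‖v'‖ := by nlinarith [norm_nonneg v']
  have h3 : -(‖v‖*‖v'‖) ≤ (inner ℝ v v' : ℝ) := by
    have := abs_real_inner_le_norm v v'
    rw [abs_le] at this
    linarith [this.1]
  nlinarith [sq_nonneg (‖v‖ - ‖v'‖), sq_nonneg ‖x'-x‖]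

lemma splineCost_lb (x x' v v' : E) (M : ℝ) (hM : ‖x' - x‖ ≤ M) :
    -36*M^2 ≤ splineCost x x' v v' := by
  have h := splineCost_coercive_bound x x' v v' M hM
  nlinarith [sq_nonneg (‖v‖ - 3*M), sq_nonneg (‖v'‖ - 3*M), norm_nonneg v, norm_nonneg v',
    le_trans (norm_nonneg _) hM]

lemma splineCost_lb' (x x' v v' : E) (M : ℝ) (hM : ‖x' - x‖ ≤ M) :
    2*‖v‖^2 - 12*M*‖v‖ - 18*M^2 ≤ splineCost x x' v v' := by
  have h := splineCost_coercive_bound x x' v v' M hM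
  nlinarith [sq_nonneg (‖v'‖ - 3*M)]

lemma splineCost_lb'' (x x' v v' : E) (M : ℝ) (hM : ‖x' - x‖ ≤ M) :
    2*‖v'‖^2 - 12*M*‖v'‖ - 18*M^2 ≤ splineCost x x' v v' := by
  have h := splineCost_coercive_bound x x' v v' M hM
  nlinarith [sq_nonneg (‖v‖ - 3*M)]

lemma exists_spline_min (N : ℕ) (hN : 1 ≤ N) (x : Fin (N+1) → E) :
    ∃ v0 : Fin (N+1) → E, ∀ v : Fin (N+1) → E,
      (∑ i : Fin N, splineCost (x i.castSucc) (x i.succ) (v0 i.castSucc) (v0 i.succ))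
      ≤ ∑ i : Fin N, splineCost (x i.castSucc) (x i.succ) (v i.castSucc) (v i.succ) := by
  set F : (Fin (N+1) → E) → ℝ := fun v =>
    ∑ i : Fin N, splineCost (x i.castSucc) (x i.succ) (v i.castSucc) (v i.succ) with hF
  have hcont : Continuous F := by
    apply continuous_finset_sum
    intro i _
    unfold splineCost
    have h1 : Continuous fun v : Fin (N+1) → E => v i.castSucc := continuous_apply _
    have h2 : Continuous fun v : Fin (N+1) → E => v i.succ := continuous_apply _
    have c1 : Continuous fun v : Fin (N+1) → E => x i.succ - x i.castSucc - v i.castSucc :=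
      continuous_const.sub h1
    have c2 : Continuous fun v : Fin (N+1) → E => v i.succ - v i.castSucc := h2.sub h1
    exact ((continuous_const.mul (c1.norm.pow 2)).sub
      (continuous_const.mul (c1.inner c2))).add (continuous_const.mul (c2.norm.pow 2))
  set M : ℝ := ∑ i : Fin N, ‖x i.succ - x i.castSucc‖ with hM
  have hM0 : 0 ≤ M := Finset.sum_nonneg fun i _ => norm_nonneg _
  have hMi : ∀ i : Fin N, ‖x i.succ - x i.castSucc‖ ≤ M := fun i =>
    Finset.single_le_sum (f := fun i : Fin N => ‖x i.succ - x i.castSucc‖)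
      (fun j _ => norm_nonneg _) (Finset.mem_univ i)
  have hbound : ∀ v : Fin (N+1) → E, 2*‖v‖^2 - 12*M*‖v‖ - 36*M^2*N ≤ F v := by
    intro v
    obtain ⟨j0, -, hj0⟩ := Finset.exists_max_image (Finset.univ : Finset (Fin (N+1)))
      (fun j => ‖v j‖) ⟨0, Finset.mem_univ 0⟩
    have hnv : ‖v‖ = ‖v j0‖ := by
      apply le_antisymm
      · exact (pi_norm_le_iff_of_nonneg (norm_nonneg _)).2 fun i => hj0 i (Finset.mem_univ i)
      · exact norm_le_pi_norm v j0
    obtain ⟨i0, hi0⟩ : ∃ i0 : Fin N, j0 = i0.castSucc ∨ j0 = i0.succ := by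
      rcases lt_or_eq_of_le (Nat.lt_succ_iff.mp j0.isLt) with h | h
      · exact ⟨⟨j0.val, h⟩, Or.inl (by ext; simp)⟩
      · refine ⟨⟨N-1, by omega⟩, Or.inr (by ext; simp; omega)⟩
    have hterm : 2*‖v‖^2 - 12*M*‖v‖ - 18*M^2
        ≤ splineCost (x i0.castSucc) (x i0.succ) (v i0.castSucc) (v i0.succ) := by
      rcases hi0 with h | h
      · rw [hnv, h]; exact splineCost_lb' _ _ _ _ M (hMi i0)
      · rw [hnv, h]; exact splineCost_lb'' _ _ _ _ M (hMi i0)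
    have hsplit : F v = splineCost (x i0.castSucc) (x i0.succ) (v i0.castSucc) (v i0.succ)
        + ∑ i ∈ Finset.univ.erase i0,
            splineCost (x i.castSucc) (x i.succ) (v i.castSucc) (v i.succ) :=
      (Finset.add_sum_erase _ _ (Finset.mem_univ i0)).symm
    have hrest : ((N:ℝ) - 1) * (-36*M^2) ≤ ∑ i ∈ Finset.univ.erase i0,
        splineCost (x i.castSucc) (x i.succ) (v i.castSucc) (v i.succ) := by
      have := Finset.sum_le_sum (s := Finset.univ.erase i0)
        (f := fun _ : Fin N => -36*M^2)
        (g := fun i : Fin N => splineCost (x i.castSucc) (x i.succ) (v i.castSucc) (v i.succ))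
        (fun i _ => splineCost_lb _ _ _ _ M (hMi i))
      rw [Finset.sum_const, Finset.card_erase_of_mem (Finset.mem_univ i0),
        Finset.card_univ, Fintype.card_fin, nsmul_eq_mul] at this
      calc ((N:ℝ) - 1) * (-36*M^2) = ((N - 1 : ℕ) : ℝ) * (-36*M^2) := by
            rw [Nat.cast_sub hN]; norm_num
        _ ≤ _ := this
    rw [hsplit]
    have hN1 : (1:ℝ) ≤ N := by exact_mod_cast hN
    nlinarith [sq_nonneg M]
  have hcoer : Filter.Tendsto F (Filter.cocompact _) Filter.atTop := by
    have h1 : Filter.Tendsto (fun s : ℝ => 2*s^2 - 12*M*s - 36*M^2*N)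
        Filter.atTop Filter.atTop := by
      have h2 : Filter.Tendsto (fun s : ℝ => s * (2*s - 12*M) - 36*M^2*N)
          Filter.atTop Filter.atTop := by
        apply Filter.tendsto_atTop_add_const_right
        apply Filter.Tendsto.atTop_mul_atTop₀ Filter.tendsto_id
        apply Filter.tendsto_atTop_add_const_right
        exact (Filter.tendsto_id.const_mul_atTop two_pos)
      refine h2.congr fun s => by ring
    exact Filter.tendsto_atTop_mono hbound
      (h1.comp tendsto_norm_cocompact_atTop)
  obtain ⟨v0, hv0⟩ := hcont.exists_forall_le hcoer
  exact ⟨v0, hv0⟩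

def FN {d : ℕ} (p w : ℕ → EuclideanSpace ℝ (Fin d)) (N : ℕ) : ℝ :=
  ∑ i ∈ Finset.range N, splineCost (p i) (p (i+1)) (w i) (w (i+1))

lemma FN_congr (p w w' : ℕ → E) (N : ℕ) (h : ∀ i ≤ N, w i = w' i) :
    FN p w N = FN p w' N := by
  unfold FN
  apply Finset.sum_congr rfl
  intro i hi
  rw [Finset.mem_range] at hi
  rw [h i (by omega), h (i+1) (by omega)]

lemma glue (p V : ℕ → E) (N : ℕ)
    (hmin : ∀ w : ℕ → E, FN p V N ≤ FN p w N) (e : ℕ) (he : e + 1 < N) :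
    hermDD (p e) (p (e+1)) (V e) (V (e+1)) 1
      = hermDD (p (e+1)) (p (e+2)) (V (e+1)) (V (e+2)) 0 := by
  set j := e + 1 with hj
  set G : E := ((4:ℝ)•V e + (8:ℝ)•V j - (12:ℝ)•(p j - p e))
      + ((8:ℝ)•V j + (4:ℝ)•V (j+1) - (12:ℝ)•(p (j+1) - p j)) with hGdef
  have key : ∀ (w : E) (s : ℝ), FN p (Function.update V j (V j + s•w)) N
      = FN p V N + s * (inner ℝ G w : ℝ) + s^2 * (8*‖w‖^2) := by
    intro w s
    set u := Function.update V j (V j + s•w) with hu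
    have hju : u j = V j + s•w := Function.update_self j _ V
    have hne : ∀ k, k ≠ j → u k = V k := fun k hk => Function.update_of_ne hk _ V
    have hdiff : FN p u N - FN p V N = ∑ i ∈ Finset.range N,
        (splineCost (p i) (p (i+1)) (u i) (u (i+1))
          - splineCost (p i) (p (i+1)) (V i) (V (i+1))) := by
      rw [FN, FN, Finset.sum_sub_distrib]
    have hss : ({e, j} : Finset ℕ) ⊆ Finset.range N := by
      intro k hk
      simp only [Finset.mem_insert, Finset.mem_singleton] at hk
      rcases hk with h | h <;> (rw [Finset.mem_range]; omega)
    have hsupp : ∀ i ∈ Finset.range N, i ∉ ({e, j} : Finset ℕ) →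
        (splineCost (p i) (p (i+1)) (u i) (u (i+1))
          - splineCost (p i) (p (i+1)) (V i) (V (i+1))) = 0 := by
      intro i _ hi
      simp only [Finset.mem_insert, Finset.mem_singleton] at hi
      push_neg at hi
      rw [hne i (by omega), hne (i+1) (by omega), sub_self]
    have hsum : FN p u N - FN p V N = ∑ i ∈ ({e, j} : Finset ℕ),
        (splineCost (p i) (p (i+1)) (u i) (u (i+1))
          - splineCost (p i) (p (i+1)) (V i) (V (i+1))) := by
      rw [hdiff, ← Finset.sum_subset hss hsupp]
    rw [Finset.sum_pair (by omega : e ≠ j)] at hsum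
    have he1 : u e = V e := hne e (by omega)
    have he2 : u (e+1) = V j + s•w := hju
    have hj2 : u (j+1) = V (j+1) := hne (j+1) (by omega)
    rw [he1, he2, hj2] at hsum
    rw [splineCost_perturb_v' (p e) (p (e+1)) (V e) (V j) w s,
      splineCost_perturb_v (p j) (p (j+1)) (V j) (V (j+1)) w s] at hsum
    have : FN p u N = FN p V N + (FN p u N - FN p V N) := by ring
    rw [this, hsum, hGdef]
    simp only [inner_add_left]
    ring
  have hGw : ∀ w : E, (inner ℝ G w : ℝ) = 0 := by
    intro w
    apply eq_zero_of_quadratic (by positivity : (0:ℝ) ≤ 8*‖w‖^2)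
    intro s
    have := hmin (Function.update V j (V j + s•w))
    rw [key w s] at this
    linarith
  have hG : G = 0 := by
    have := hGw G
    exact inner_self_eq_zero.mp this
  have hhalf : hermDD (p e) (p (e+1)) (V e) (V (e+1)) 1
      - hermDD (p (e+1)) (p (e+2)) (V (e+1)) (V (e+2)) 0 = ((1:ℝ)/2) • G := by
    rw [hGdef]
    unfold hermDD hB hC
    match_scalars <;> ring
  rw [hG, smul_zero] at hhalf
  exact sub_eq_zero.mp hhalf

lemma herm_contDiff (x x' v v' : E) : ContDiff ℝ 2 (herm x x' v v') := by
  unfold herm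
  exact ((contDiff_const.add (contDiff_id.smul contDiff_const)).add
    ((contDiff_id.pow 2).smul contDiff_const)).add ((contDiff_id.pow 3).smul contDiff_const)

lemma cubic_diff (x0 x1 x2 v0 v1 v2 : E)
    (h2 : hermDD x0 x1 v0 v1 1 = hermDD x1 x2 v1 v2 0) (s : ℝ) :
    herm x1 x2 v1 v2 (s - 1)
      = herm x0 x1 v0 v1 s + ((s-1)^3) • (hC x1 x2 v1 v2 - hC x0 x1 v0 v1) := by
  have key : herm x1 x2 v1 v2 (s-1) - (herm x0 x1 v0 v1 s
        + ((s-1)^3) • (hC x1 x2 v1 v2 - hC x0 x1 v0 v1))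
      = (((s-1)^2)/2) • (hermDD x1 x2 v1 v2 0 - hermDD x0 x1 v0 v1 1) := by
    unfold herm hermDD hB hC
    match_scalars <;> ring
  rw [← h2, sub_self, smul_zero] at key
  exact sub_eq_zero.mp key

def piece (p V : ℕ → E) (k : ℕ) : ℝ → E :=
  fun t => herm (p k) (p (k+1)) (V k) (V (k+1)) (t - k)
def eJump (p V : ℕ → E) (k : ℕ) : E :=
  hC (p k) (p (k+1)) (V k) (V (k+1)) - hC (p (k-1)) (p k) (V (k-1)) (V k)
def splineX (p V : ℕ → E) (N : ℕ) : ℝ → E :=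
  fun t => piece p V 0 t + ∑ k ∈ Finset.Icc 1 (N-1), tp (t - k) • eJump p V k


lemma pieceY (p V : ℕ → E) (N : ℕ) (hglue : ∀ e, e + 1 < N →
      hermDD (p e) (p (e+1)) (V e) (V (e+1)) 1
        = hermDD (p (e+1)) (p (e+2)) (V (e+1)) (V (e+2)) 0)
    (i : ℕ) (hi : i < N) (t : ℝ) :
    piece p V i t = piece p V 0 t + ∑ k ∈ Finset.Icc 1 i, ((t - k)^3) • eJump p V k := by
  induction i with
  | zero => simp
  | succ n ih =>
    have hn : n < N := by omega
    have step : piece p V (n+1) t = piece p V n t + ((t - (n+1:ℕ))^3) • eJump p V (n+1) := by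
      have hd := cubic_diff (p n) (p (n+1)) (p (n+2)) (V n) (V (n+1)) (V (n+2))
        (hglue n (by omega)) (t - n)
      have e1 : (t - (n:ℝ)) - 1 = t - ((n+1:ℕ):ℝ) := by push_cast; ring
      rw [e1] at hd
      unfold piece eJump
      simp only [Nat.add_sub_cancel]
      rw [hd]
    rw [Finset.sum_Icc_succ_top (by omega : 1 ≤ n + 1), step, ih hn]
    abel

lemma splineX_eq_piece (p V : ℕ → E) (N : ℕ) (hglue : ∀ e, e + 1 < N →
      hermDD (p e) (p (e+1)) (V e) (V (e+1)) 1
        = hermDD (p (e+1)) (p (e+2)) (V (e+1)) (V (e+2)) 0)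
    (i : ℕ) (hi : i < N) (t : ℝ) (ht1 : (i:ℝ) ≤ t) (ht2 : t ≤ (i:ℝ)+1) :
    splineX p V N t = piece p V i t := by
  rw [pieceY p V N hglue i hi t]
  unfold splineX
  congr 1
  rw [← Finset.sum_filter_add_sum_filter_not (Finset.Icc 1 (N-1)) (· ≤ i)
    (fun k => tp (t - k) • eJump p V k)]
  have hz : ∑ k ∈ (Finset.Icc 1 (N-1)).filter (fun k => ¬ k ≤ i),
      tp (t - k) • eJump p V k = 0 := by
    apply Finset.sum_eq_zero
    intro k hk
    simp only [Finset.mem_filter, Finset.mem_Icc] at hk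
    have hk2 : (i:ℝ) + 1 ≤ (k:ℝ) := by
      have : i + 1 ≤ k := by omega
      exact_mod_cast this
    have : tp (t - k) = 0 := by
      rw [tp, max_eq_right (by linarith : t - (k:ℝ) ≤ 0)]
      norm_num
    rw [this, zero_smul]
  rw [hz, add_zero]
  have hfs : (Finset.Icc 1 (N-1)).filter (· ≤ i) = Finset.Icc 1 i := by
    ext k
    simp only [Finset.mem_filter, Finset.mem_Icc]
    omega
  rw [hfs]
  apply Finset.sum_congr rfl
  intro k hk
  simp only [Finset.mem_Icc] at hk
  have hk1 : (k:ℝ) ≤ (i:ℝ) := by exact_mod_cast hk.2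
  rw [tp, max_eq_left (by linarith : 0 ≤ t - (k:ℝ))]

lemma splineX_contDiff (p V : ℕ → E) (N : ℕ) : ContDiff ℝ 2 (splineX p V N) := by
  unfold splineX
  apply ContDiff.add
  · exact (herm_contDiff _ _ _ _).comp (contDiff_id.sub contDiff_const)
  · apply ContDiff.sum
    intro k _
    exact (tp_contDiff.comp (contDiff_id.sub contDiff_const)).smul contDiff_const

lemma piece_deriv (p V : ℕ → E) (k : ℕ) :
    deriv (piece p V k) = fun t => hermD (p k) (p (k+1)) (V k) (V (k+1)) (t - k) :=
  funext fun t => (hasDerivAt_comp_sub _ t (herm_hasDerivAt _ _ _ _ _)).deriv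

lemma piece_dd (p V : ℕ → E) (k : ℕ) :
    deriv (deriv (piece p V k)) = fun t => hermDD (p k) (p (k+1)) (V k) (V (k+1)) (t - k) := by
  rw [piece_deriv]
  exact funext fun t => (hasDerivAt_comp_sub _ t (hermD_hasDerivAt _ _ _ _ _)).deriv

lemma splineX_dd (p V : ℕ → E) (N : ℕ) (hglue : ∀ e, e + 1 < N →
      hermDD (p e) (p (e+1)) (V e) (V (e+1)) 1
        = hermDD (p (e+1)) (p (e+2)) (V (e+1)) (V (e+2)) 0)
    (i : ℕ) (hi : i < N) (t : ℝ) (ht : t ∈ Set.Ioo (i:ℝ) ((i:ℝ)+1)) :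
    deriv (deriv (splineX p V N)) t = hermDD (p i) (p (i+1)) (V i) (V (i+1)) (t - i) := by
  have hIoo : ∀ s ∈ Set.Ioo (i:ℝ) ((i:ℝ)+1), splineX p V N s = piece p V i s := fun s hs =>
    splineX_eq_piece p V N hglue i hi s hs.1.le hs.2.le
  have hd1 : ∀ s ∈ Set.Ioo (i:ℝ) ((i:ℝ)+1),
      deriv (splineX p V N) s = deriv (piece p V i) s := by
    intro s hs
    apply Filter.EventuallyEq.deriv_eq
    filter_upwards [isOpen_Ioo.mem_nhds hs] with r hr
    exact hIoo r hr
  have hd2 : deriv (deriv (splineX p V N)) t = deriv (deriv (piece p V i)) t := by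
    apply Filter.EventuallyEq.deriv_eq
    filter_upwards [isOpen_Ioo.mem_nhds ht] with r hr
    exact hd1 r hr
  rw [hd2, piece_dd]


lemma splineX_interp (p V : ℕ → E) (N : ℕ) (hN : 1 ≤ N) (hglue : ∀ e, e + 1 < N →
      hermDD (p e) (p (e+1)) (V e) (V (e+1)) 1
        = hermDD (p (e+1)) (p (e+2)) (V (e+1)) (V (e+2)) 0)
    (m : ℕ) (hm : m ≤ N) : splineX p V N (m:ℝ) = p m := by
  rcases lt_or_eq_of_le hm with h | h
  · rw [splineX_eq_piece p V N hglue m h (m:ℝ) le_rfl (by linarith)]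
    unfold piece
    rw [sub_self, herm_zero]
  · rw [h]
    have hcast : ((N-1:ℕ):ℝ) = (N:ℝ) - 1 := by
      rw [Nat.cast_sub hN]; norm_num
    rw [splineX_eq_piece p V N hglue (N-1) (by omega) (N:ℝ)
      (by rw [hcast]; linarith) (by rw [hcast]; linarith)]
    unfold piece
    rw [hcast, show (N:ℝ) - ((N:ℝ)-1) = 1 by ring, herm_one,
      show N - 1 + 1 = N by omega]

lemma splineX_energy (p V : ℕ → E) (N : ℕ) (hglue : ∀ e, e + 1 < N →
      hermDD (p e) (p (e+1)) (V e) (V (e+1)) 1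
        = hermDD (p (e+1)) (p (e+2)) (V (e+1)) (V (e+2)) 0) :
    ∫ t in (0:ℝ)..(N:ℝ), ‖deriv (deriv (splineX p V N)) t‖^2 = FN p V N := by
  obtain ⟨-, -, hdd⟩ := contDiff_two_bits _ (splineX_contDiff p V N)
  have hint : ∀ k, k < N → IntervalIntegrable
      (fun t => ‖deriv (deriv (splineX p V N)) t‖^2) volume
      ((k:ℕ):ℝ) ((k+1:ℕ):ℝ) := fun k _ => (hdd.norm.pow 2).intervalIntegrable _ _
  have hsum := intervalIntegral.sum_integral_adjacent_intervals
    (a := fun k : ℕ => (k:ℝ)) (μ := volume) (n := N) hint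
  simp only [Nat.cast_zero] at hsum
  rw [← hsum]
  unfold FN
  apply Finset.sum_congr rfl
  intro k hk
  rw [Finset.mem_range] at hk
  have hstep : ∫ t in ((k:ℕ):ℝ)..((k+1:ℕ):ℝ), ‖deriv (deriv (splineX p V N)) t‖^2
      = ∫ t in ((k:ℕ):ℝ)..((k+1:ℕ):ℝ),
          ‖hermDD (p k) (p (k+1)) (V k) (V (k+1)) (t - k)‖^2 := by
    apply intervalIntegral.integral_congr_ae
    have hne : ∀ᵐ t : ℝ, t ≠ ((k+1:ℕ):ℝ) := by
      rw [MeasureTheory.ae_iff]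
      have : {t : ℝ | ¬ t ≠ ((k+1:ℕ):ℝ)} = {((k+1:ℕ):ℝ)} := by
        ext t; simp
      rw [this]
      exact Real.volume_singleton
    filter_upwards [hne] with t ht hmem
    rw [Set.uIoc_of_le (by push_cast; linarith : ((k:ℕ):ℝ) ≤ ((k+1:ℕ):ℝ))] at hmem
    have htIoo : t ∈ Set.Ioo ((k:ℕ):ℝ) ((k:ℝ)+1) := by
      constructor
      · exact hmem.1
      · push_cast at hmem ht ⊢
        rcases lt_or_eq_of_le hmem.2 with h | h
        · exact h
        · exact absurd h ht
    rw [splineX_dd p V N hglue k hk t htIoo]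
  rw [hstep]
  have hcomp := intervalIntegral.integral_comp_sub_right
    (fun s => ‖hermDD (p k) (p (k+1)) (V k) (V (k+1)) s‖^2) ((k:ℕ):ℝ)
    (a := ((k:ℕ):ℝ)) (b := ((k+1:ℕ):ℝ))
  rw [hcomp, sub_self, show ((k+1:ℕ):ℝ) - ((k:ℕ):ℝ) = 1 by push_cast; ring,
    energy_herm]


theorem stmt3 (d N : ℕ) (hd : 1 ≤ d) (hN : 1 ≤ N)
    (x : Fin (N + 1) → EuclideanSpace ℝ (Fin d)) :
    IsLeast { y : ℝ | ∃ v : Fin (N + 1) → EuclideanSpace ℝ (Fin d),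
        y = ∑ i : Fin N, splineCost (x i.castSucc) (x i.succ) (v i.castSucc) (v i.succ) }
      (multiCost N x) := by
  obtain ⟨v0, hv0⟩ := exists_spline_min N hN x
  set p : ℕ → EuclideanSpace ℝ (Fin d) :=
    fun i => x ⟨min i N, Nat.lt_succ_of_le (min_le_right i N)⟩ with hp
  set Vn : ℕ → EuclideanSpace ℝ (Fin d) :=
    fun i => v0 ⟨min i N, Nat.lt_succ_of_le (min_le_right i N)⟩ with hVn
  -- bridge between Fin sums and FN
  have bridge : ∀ v : Fin (N+1) → EuclideanSpace ℝ (Fin d),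
      (∑ i : Fin N, splineCost (x i.castSucc) (x i.succ) (v i.castSucc) (v i.succ))
      = FN p (fun n => v ⟨min n N, Nat.lt_succ_of_le (min_le_right n N)⟩) N := by
    intro v
    rw [FN, ← Fin.sum_univ_eq_sum_range]
    apply Finset.sum_congr rfl
    intro i _
    have e1 : (⟨min (i:ℕ) N, Nat.lt_succ_of_le (min_le_right _ N)⟩ : Fin (N+1))
        = i.castSucc := by
      ext; simp <;> omega
    have e2 : (⟨min ((i:ℕ)+1) N, Nat.lt_succ_of_le (min_le_right _ N)⟩ : Fin (N+1))
        = i.succ := by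
      ext; simp <;> omega
    rw [hp]
    simp only [e1, e2]
  -- minimality at ℕ level
  have hminN : ∀ w : ℕ → EuclideanSpace ℝ (Fin d), FN p Vn N ≤ FN p w N := by
    intro w
    have h1 : FN p Vn N
        = ∑ i : Fin N, splineCost (x i.castSucc) (x i.succ) (v0 i.castSucc) (v0 i.succ) :=
      (bridge v0).symm
    have h2 : FN p (fun n => (fun j : Fin (N+1) => w (j:ℕ)) ⟨min n N,
        Nat.lt_succ_of_le (min_le_right n N)⟩) N = FN p w N := by
      apply FN_congr
      intro i hi
      show w ((⟨min i N, Nat.lt_succ_of_le (min_le_right i N)⟩ : Fin (N+1)) : ℕ) = w i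
      have : ((⟨min i N, Nat.lt_succ_of_le (min_le_right i N)⟩ : Fin (N+1)) : ℕ) = i := by
        simp; omega
      rw [this]
    calc FN p Vn N = _ := h1
      _ ≤ ∑ i : Fin N, splineCost (x i.castSucc) (x i.succ)
            ((fun j : Fin (N+1) => w (j:ℕ)) i.castSucc)
            ((fun j : Fin (N+1) => w (j:ℕ)) i.succ) := hv0 (fun j : Fin (N+1) => w (j:ℕ))
      _ = FN p (fun n => (fun j : Fin (N+1) => w (j:ℕ)) ⟨min n N,
            Nat.lt_succ_of_le (min_le_right n N)⟩) N := bridge (fun j : Fin (N+1) => w (j:ℕ))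
      _ = FN p w N := h2
  have hglue := glue p Vn N hminN
  set m : ℝ := FN p Vn N with hm
  set X := splineX p Vn N with hX
  have hinterp : ∀ i : Fin (N+1), X ((i:ℕ):ℝ) = x i := by
    intro i
    rw [hX, splineX_interp p Vn N hN hglue (i:ℕ) (by omega)]
    simp only [hp]
    exact congrArg x (Fin.ext (show min (i:ℕ) N = (i:ℕ) by omega))
  have hXE : ∫ t in (0:ℝ)..(N:ℝ), ‖deriv (deriv X) t‖^2 = m :=
    splineX_energy p Vn N hglue
  have hT : IsLeast { y : ℝ | ∃ Z : ℝ → EuclideanSpace ℝ (Fin d), ContDiff ℝ 2 Z ∧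
      (∀ i : Fin (N + 1), Z ((i : ℕ) : ℝ) = x i) ∧
      y = ∫ t in (0:ℝ)..(N:ℝ), ‖deriv (deriv Z) t‖ ^ 2 } m := by
    constructor
    · exact ⟨X, splineX_contDiff p Vn N, hinterp, hXE.symm⟩
    · rintro y ⟨Z, hZ2, hZi, rfl⟩
      obtain ⟨-, -, hzdd⟩ := contDiff_two_bits Z hZ2
      have hint : ∀ k, k < N → IntervalIntegrable
          (fun t => ‖deriv (deriv Z) t‖^2) volume ((k:ℕ):ℝ) ((k+1:ℕ):ℝ) :=
        fun k _ => (hzdd.norm.pow 2).intervalIntegrable _ _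
      have hsum := intervalIntegral.sum_integral_adjacent_intervals
        (a := fun k : ℕ => (k:ℝ)) (μ := volume) (n := N) hint
      simp only [Nat.cast_zero] at hsum
      rw [← hsum]
      have hZp : ∀ k, k ≤ N → Z ((k:ℕ):ℝ) = p k := by
        intro k hk
        have := hZi ⟨k, by omega⟩
        rw [show ((⟨k, by omega⟩ : Fin (N+1)) : ℕ) = k from rfl] at this
        rw [this]
        simp only [hp]
        exact congrArg x (Fin.ext (show k = min k N by omega))
      have hterm : ∀ k ∈ Finset.range N,
          splineCost (p k) (p (k+1)) (deriv Z (k:ℝ)) (deriv Z ((k+1:ℕ):ℝ))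
          ≤ ∫ t in ((k:ℕ):ℝ)..((k+1:ℕ):ℝ), ‖deriv (deriv Z) t‖^2 := by
        intro k hk
        rw [Finset.mem_range] at hk
        have h1 := interval_lb Z hZ2 (k:ℝ)
        rw [hZp k (by omega)] at h1
        have hc : ((k:ℝ)+1) = ((k+1:ℕ):ℝ) := by push_cast; ring
        rw [hc] at h1
        rw [hZp (k+1) (by omega)] at h1
        rw [← hc] at h1
        rw [show ((k+1:ℕ):ℝ) = (k:ℝ)+1 from by push_cast; ring]
        exact h1
      calc m ≤ FN p (fun n => deriv Z ((n:ℕ):ℝ)) N := hminN _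
        _ = ∑ k ∈ Finset.range N,
            splineCost (p k) (p (k+1)) (deriv Z (k:ℝ)) (deriv Z ((k+1:ℕ):ℝ)) := by
            rw [FN]
        _ ≤ ∑ k ∈ Finset.range N,
            ∫ t in ((k:ℕ):ℝ)..((k+1:ℕ):ℝ), ‖deriv (deriv Z) t‖^2 :=
            Finset.sum_le_sum hterm
  have hMC : multiCost N x = m := hT.csInf_eq
  rw [hMC]
  have hb0 : m = ∑ i : Fin N, splineCost (x i.castSucc) (x i.succ)
      (v0 i.castSucc) (v0 i.succ) := by
    rw [hm, hVn]
    exact (bridge v0).symm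
  constructor
  · exact ⟨v0, hb0⟩
  · rintro y ⟨v, rfl⟩
    calc m = ∑ i : Fin N, splineCost (x i.castSucc) (x i.succ) (v0 i.castSucc) (v0 i.succ) :=
        hb0
      _ ≤ _ := hv0 v
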